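/- Let μ be a probability measure on {0,1}×{0,1}×{0,1} with coordinate random variables X, Y, Z. If all six relations X⊥Y, X⊥Z, Y⊥Z, X⊥Y|Z, X⊥Z|Y and Y⊥Z|X hold, then X, Y, Z are mutually independent. -/

import Mathlib

open MeasureTheory

/-- The sample space `{0,1} × {0,1} × {0,1}`. -/
abbrev Omega3 : Type := Fin 2 × Fin 2 × Fin 2

noncomputable section

/-- marginal `μ(X = i)` -/
def pX (μ : Measure Omega3) (i : Fin 2) : ENNReal := μ {ω | ω.1 = i}
/-- marginal `μ(Y = j)` -/
def pY (μ : Measure Omega3) (j : Fin 2) : ENNReal := μ {ω | ω.2.1 = j}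
/-- marginal `μ(Z = k)` -/
def pZ (μ : Measure Omega3) (k : Fin 2) : ENNReal := μ {ω | ω.2.2 = k}
/-- `μ(X = i, Y = j)` -/
def pXY (μ : Measure Omega3) (i j : Fin 2) : ENNReal := μ {ω | ω.1 = i ∧ ω.2.1 = j}
/-- `μ(X = i, Z = k)` -/
def pXZ (μ : Measure Omega3) (i k : Fin 2) : ENNReal := μ {ω | ω.1 = i ∧ ω.2.2 = k}
/-- `μ(Y = j, Z = k)` -/
def pYZ (μ : Measure Omega3) (j k : Fin 2) : ENNReal := μ {ω | ω.2.1 = j ∧ ω.2.2 = k}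
/-- `μ(X = i, Y = j, Z = k)` -/
def pXYZ (μ : Measure Omega3) (i j k : Fin 2) : ENNReal :=
  μ {ω | ω.1 = i ∧ ω.2.1 = j ∧ ω.2.2 = k}

/-- `X ⊥ Y` -/
def IndXY (μ : Measure Omega3) : Prop := ∀ i j, pXY μ i j = pX μ i * pY μ j
/-- `X ⊥ Z` -/
def IndXZ (μ : Measure Omega3) : Prop := ∀ i k, pXZ μ i k = pX μ i * pZ μ k
/-- `Y ⊥ Z` -/
def IndYZ (μ : Measure Omega3) : Prop := ∀ j k, pYZ μ j k = pY μ j * pZ μ k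
/-- `X ⊥ Y | Z` -/
def CondXY_Z (μ : Measure Omega3) : Prop :=
  ∀ i j k, pXYZ μ i j k * pZ μ k = pXZ μ i k * pYZ μ j k
/-- `X ⊥ Z | Y` -/
def CondXZ_Y (μ : Measure Omega3) : Prop :=
  ∀ i j k, pXYZ μ i j k * pY μ j = pXY μ i j * pYZ μ j k
/-- `Y ⊥ Z | X` -/
def CondYZ_X (μ : Measure Omega3) : Prop :=
  ∀ i j k, pXYZ μ i j k * pX μ i = pXY μ i j * pXZ μ i k
/-- `X ⊥ Y ⊥ Z` (mutual independence) -/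
def MutualIndep (μ : Measure Omega3) : Prop :=
  ∀ i j k, pXYZ μ i j k = pX μ i * pY μ j * pZ μ k
/-- `X ⊥ (Y, Z)` (joint independence of `X` from the pair) -/
def JointX_YZ (μ : Measure Omega3) : Prop :=
  ∀ i j k, pXYZ μ i j k = pX μ i * pYZ μ j k
/-- `Y ⊥ (X, Z)` -/
def JointY_XZ (μ : Measure Omega3) : Prop :=
  ∀ i j k, pXYZ μ i j k = pY μ j * pXZ μ i k
/-- `Z ⊥ (X, Y)` -/
def JointZ_XY (μ : Measure Omega3) : Prop :=
  ∀ i j k, pXYZ μ i j k = pZ μ k * pXY μ i j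
/-- `μ` has full support on the eight atoms. -/
def FullSupport (μ : Measure Omega3) : Prop := ∀ i j k, 0 < pXYZ μ i j k

theorem stmt_13 (μ : Measure Omega3) [IsProbabilityMeasure μ]
    (h1 : IndXY μ) (h2 : IndXZ μ) (h3 : IndYZ μ)
    (h4 : CondXY_Z μ) (h5 : CondXZ_Y μ) (h6 : CondYZ_X μ) :
    MutualIndep μ := by
  intro i j k
  by_cases hz : pZ μ k = 0
  · have hle : pXYZ μ i j k ≤ pZ μ k := by
      apply measure_mono
      intro ω hω
      exact hω.2.2
    have h0 : pXYZ μ i j k = 0 := le_antisymm (hz ▸ hle) zero_le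
    rw [h0, hz, mul_zero]
  · have key : pXYZ μ i j k * pZ μ k = (pX μ i * pY μ j * pZ μ k) * pZ μ k := by
      rw [h4 i j k, h2 i k, h3 j k]
      ring
    exact (ENNReal.mul_left_inj hz (measure_ne_top μ _)).mp key
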